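/- Let p be a probability vector in the simplex Δ^d, v ∈ [0, H]^d, and α ≥ 0. Define f(p, v, α) = pᵀv + max{α·sqrt(Var_p(v)), α²·H}, where Var_p(v) = ∑ᵢ pᵢvᵢ² - (∑ᵢ pᵢvᵢ)². Then f(p, v, α) is non-decreasing in each entry of v. -/
import Mathlib


/-- Monotone-bonus property: for a probability vector `p`, `v ∈ [0,H]^d` and `α ≥ 0`,
the functional `f(p,v,α) = pᵀv + max{α √Var_p(v), α² H}` is non-decreasing in each
entry of `v`. -/
theorem stmt_9 (d : ℕ) (p : Fin d → ℝ) (hp : ∀ i, 0 ≤ p i) (hsum : ∑ i, p i = 1)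
    (H α : ℝ) (hH : 0 ≤ H) (hα : 0 ≤ α)
    (v w : Fin d → ℝ) (hv : ∀ i, v i ∈ Set.Icc 0 H) (hw : ∀ i, w i ∈ Set.Icc 0 H)
    (hvw : ∀ i, v i ≤ w i) :
    ∑ i, p i * v i +
        max (α * Real.sqrt (∑ i, p i * (v i) ^ 2 - (∑ i, p i * v i) ^ 2)) (α ^ 2 * H) ≤
      ∑ i, p i * w i +
        max (α * Real.sqrt (∑ i, p i * (w i) ^ 2 - (∑ i, p i * w i) ^ 2)) (α ^ 2 * H) := by
  set mv := ∑ i, p i * v i with hmv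
  set mw := ∑ i, p i * w i with hmw
  set Vv := ∑ i, p i * (v i) ^ 2 - mv ^ 2 with hVv
  set Vw := ∑ i, p i * (w i) ^ 2 - mw ^ 2 with hVw
  have hmle : mv ≤ mw :=
    Finset.sum_le_sum fun i _ => mul_le_mul_of_nonneg_left (hvw i) (hp i)
  have hmvH : mv ≤ H := by
    calc mv ≤ ∑ i, p i * H :=
          Finset.sum_le_sum fun i _ => mul_le_mul_of_nonneg_left (hv i).2 (hp i)
      _ = H := by rw [← Finset.sum_mul, hsum, one_mul]
  have hmwH : mw ≤ H := by
    calc mw ≤ ∑ i, p i * H :=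
          Finset.sum_le_sum fun i _ => mul_le_mul_of_nonneg_left (hw i).2 (hp i)
      _ = H := by rw [← Finset.sum_mul, hsum, one_mul]
  have hmv0 : 0 ≤ mv :=
    Finset.sum_nonneg fun i _ => mul_nonneg (hp i) (hv i).1
  -- variance nonnegativity via Cauchy–Schwarz
  have varnn : ∀ u : Fin d → ℝ, 0 ≤ ∑ i, p i * (u i) ^ 2 - (∑ i, p i * u i) ^ 2 := by
    intro u
    have key : (∑ i, Real.sqrt (p i) * (Real.sqrt (p i) * u i)) ^ 2 ≤
        (∑ i, Real.sqrt (p i) ^ 2) * ∑ i, (Real.sqrt (p i) * u i) ^ 2 :=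
      Finset.sum_mul_sq_le_sq_mul_sq _ _ _
    have e1 : ∀ i : Fin d, Real.sqrt (p i) * (Real.sqrt (p i) * u i) = p i * u i := by
      intro i; rw [← mul_assoc, Real.mul_self_sqrt (hp i)]
    have e2 : ∀ i : Fin d, Real.sqrt (p i) ^ 2 = p i := fun i => Real.sq_sqrt (hp i)
    have e3 : ∀ i : Fin d, (Real.sqrt (p i) * u i) ^ 2 = p i * (u i) ^ 2 := by
      intro i; rw [mul_pow, Real.sq_sqrt (hp i)]
    simp only [e1, e2, e3, hsum, one_mul] at key
    linarith
  have hVv0 : 0 ≤ Vv := varnn v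
  have hVw0 : 0 ≤ Vw := varnn w
  -- variance decrease bound
  have hsq : ∑ i, p i * (v i) ^ 2 ≤ ∑ i, p i * (w i) ^ 2 := by
    refine Finset.sum_le_sum fun i _ => mul_le_mul_of_nonneg_left ?_ (hp i)
    exact pow_le_pow_left₀ (hv i).1 (hvw i) 2
  have hdiff : Vv - Vw ≤ 2 * H * (mw - mv) := by
    have h1 : mw ^ 2 - mv ^ 2 ≤ 2 * H * (mw - mv) := by nlinarith
    simp only [hVv, hVw]; linarith
  -- abbreviations for sqrt
  set sv := Real.sqrt Vv with hsv
  set sw := Real.sqrt Vw with hsw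
  have hsv0 : 0 ≤ sv := Real.sqrt_nonneg _
  have hsw0 : 0 ≤ sw := Real.sqrt_nonneg _
  have hsv2 : sv ^ 2 = Vv := Real.sq_sqrt hVv0
  have hsw2 : sw ^ 2 = Vw := Real.sq_sqrt hVw0
  rcases le_or_gt (α * sv) (α ^ 2 * H) with hcase | hcase
  · rw [max_eq_right hcase]
    have : α ^ 2 * H ≤ max (α * sw) (α ^ 2 * H) := le_max_right _ _
    linarith
  · rw [max_eq_left hcase.le]
    -- here α * sv > α² H ≥ 0, so α > 0 and sv > α H
    have hα0 : 0 < α := by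
      rcases hα.lt_or_eq with h | h
      · exact h
      · exfalso; rw [← h] at hcase; simp at hcase
    have hsvH : α * H < sv := by
      have := hcase
      nlinarith
    set s := max sw (α * H) with hs
    have hs1 : α * H ≤ s := le_max_right _ _
    have hs2 : sw ≤ s := le_max_left _ _
    have hs0 : 0 ≤ s := le_trans (mul_nonneg hα hH) hs1
    have hmax : max (α * sw) (α ^ 2 * H) = α * s := by
      rw [hs, mul_max_of_nonneg _ _ hα]; ring_nf
    rw [hmax]
    -- goal: mv + α * sv ≤ mw + α * s
    rcases le_or_gt sv s with h | h
    · have := mul_le_mul_of_nonneg_left h hα0.le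
      linarith
    · -- sv > s ≥ αH > 0... but need H > 0? if H = 0 then αH = 0, still ok below
      have hsum_pos : 0 < sv + s := by linarith
      have hVws : Vw ≤ s ^ 2 := by nlinarith
      have key : (α * (sv - s)) * (sv + s) ≤ (mw - mv) * (sv + s) := by
        have k1 : α * (Vv - Vw) ≤ α * (2 * H * (mw - mv)) :=
          mul_le_mul_of_nonneg_left hdiff hα0.le
        have k2 : (mw - mv) * (2 * (α * H)) ≤ (mw - mv) * (sv + s) :=
          mul_le_mul_of_nonneg_left (by linarith) (by linarith)
        have k4 : α * Vw ≤ α * s ^ 2 := mul_le_mul_of_nonneg_left hVws hα0.le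
        have e : (α * (sv - s)) * (sv + s) = α * Vv - α * s ^ 2 := by
          rw [← hsv2]; ring
        rw [e]; linarith [k1, k2, k4]
      have : α * (sv - s) ≤ mw - mv := le_of_mul_le_mul_right key hsum_pos
      have e2 : α * (sv - s) = α * sv - α * s := by ring
      linarith [this]
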